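/- arXiv:1703.05709 — 2 statements merged into one kernel-verified Lean document; each statement's English description precedes it below -/
import Mathlib

section
/- Under Assumptions A1 and A3, let v^β denote the optimal value of the perturbed ask-price problem (P^β) (constraints A_t(·) ≥ β_t) and let v* denote the optimal value of the ask-price problem (P) (i.e., β = 0). Then for all β = (β₁,…,β_T) in a neighborhood of 0, |v^β − v*| ≤ 2·β̄·‖S₀‖₁, where β̄ = Σ_{t=1}^T |β_t| and ‖S₀‖₁ = Σ_{i=1}^m S₀^{(i)}. -/
open MeasureTheory Finset
open scoped ENNReal NNReal

noncomputable section

variable {Ω : Type*} [m0 : MeasurableSpace Ω]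

/-- The acceptability functional `A(Y) = inf {E[Y·Z] : Z ∈ 𝒵}` associated with a
superdifferential `𝒵` (a set of densities). -/
def accFun (P : Measure Ω) (𝒵 : Set (Ω → ℝ)) (Y : Ω → ℝ) : ℝ :=
  sInf ((fun Z => ∫ ω, Y ω * Z ω ∂P) '' 𝒵)

/-- The position to be acceptable at stage `t` for the ask-price (superhedging) problem:
`(x_{t-1} - x_t)ᵀ S_t - C_t` for `1 ≤ t ≤ T-1` and `x_{T-1}ᵀ S_T - C_T` at `t = T`. -/
def askGain (T m : ℕ) (S : ℕ → Fin m → Ω → ℝ) (C : ℕ → Ω → ℝ)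
    (x : ℕ → Fin m → Ω → ℝ) (t : ℕ) (ω : Ω) : ℝ :=
  if t < T then (∑ i, (x (t - 1) i ω - x t i ω) * S t i ω) - C t ω
  else (∑ i, x (T - 1) i ω * S T i ω) - C T ω

/-- A trading strategy: `x_0` deterministic, `x_t ∈ L_∞^m(Ω, 𝔉_t)` adapted. -/
def IsStrategy (P : Measure Ω) (T m : ℕ) (F : ℕ → MeasurableSpace Ω)
    (x : ℕ → Fin m → Ω → ℝ) : Prop :=
  (∀ i, ∃ c : ℝ, ∀ ω, x 0 i ω = c) ∧
  (∀ t < T, ∀ i, StronglyMeasurable[F t] (x t i)) ∧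
  (∃ K : ℝ, ∀ t < T, ∀ i, ∀ᵐ ω ∂P, |x t i ω| ≤ K)

/-- Feasibility for the perturbed ask-price problem `(P^β)`:
`A_t(gain_t) ≥ β_t` for `t = 1, …, T`. -/
def AskFeasible (P : Measure Ω) (T m : ℕ) (F : ℕ → MeasurableSpace Ω)
    (S : ℕ → Fin m → Ω → ℝ) (C : ℕ → Ω → ℝ) (𝒵 : ℕ → Set (Ω → ℝ))
    (β : ℕ → ℝ) (x : ℕ → Fin m → Ω → ℝ) : Prop :=
  IsStrategy P T m F x ∧
    ∀ t, 1 ≤ t → t ≤ T → β t ≤ accFun P (𝒵 t) (askGain T m S C x t)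

/-- The initial capital `x₀ᵀS₀` of a strategy (written as an expectation; both `x₀` and
`S₀` are deterministic and `P` is a probability measure). -/
def initCost (P : Measure Ω) (m : ℕ) (S : ℕ → Fin m → Ω → ℝ)
    (x : ℕ → Fin m → Ω → ℝ) : ℝ :=
  ∫ ω, ∑ i, x 0 i ω * S 0 i ω ∂P

/-- The optimal value `v^β` of the perturbed ask-price problem `(P^β)`. -/
def askValue (P : Measure Ω) (T m : ℕ) (F : ℕ → MeasurableSpace Ω)
    (S : ℕ → Fin m → Ω → ℝ) (C : ℕ → Ω → ℝ) (𝒵 : ℕ → Set (Ω → ℝ))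
    (β : ℕ → ℝ) : ℝ :=
  sInf { r | ∃ x, AskFeasible P T m F S C 𝒵 β x ∧ r = initCost P m S x }

lemma accFun_shift (P : Measure Ω) [IsProbabilityMeasure P]
    (𝒵 : Set (Ω → ℝ)) (hne : 𝒵.Nonempty)
    {p q : ℝ≥0∞} (hpq : 1 / p + 1 / q = 1) (K₁ : ℝ)
    (hmeas : ∀ Z ∈ 𝒵, AEStronglyMeasurable Z P)
    (hK : ∀ Z ∈ 𝒵, eLpNorm Z q P ≤ ENNReal.ofReal K₁)
    (hdens : ∀ Z ∈ 𝒵, ∫ ω, Z ω ∂P = 1)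
    {g g' : Ω → ℝ} (hg : MemLp g p P) (d : ℝ)
    (hgg' : g' =ᵐ[P] fun ω => g ω + d) :
    accFun P 𝒵 g' = accFun P 𝒵 g + d := by
  have hq1 : (1 : ℝ≥0∞) ≤ q := by
    rw [← ENNReal.inv_le_one, ← one_div]
    calc 1 / q ≤ 1 / p + 1 / q := le_add_self
    _ = 1 := hpq
  have h1pq : (1 : ℝ≥0∞) / 1 = 1 / q + 1 / p := by
    rw [div_one, add_comm]; exact hpq.symm
  have hZmem : ∀ Z ∈ 𝒵, MemLp Z q P := fun Z hZ =>
    ⟨hmeas Z hZ, lt_of_le_of_lt (hK Z hZ) ENNReal.ofReal_lt_top⟩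
  have hint : ∀ Z ∈ 𝒵, Integrable (fun ω => g ω * Z ω) P := by
    intro Z hZ
    have h := memLp_one_iff_integrable.mp (hg.smul (hZmem Z hZ) (hpqr := ⟨by simpa [one_div] using h1pq.symm⟩))
    exact (by simpa [Pi.smul_apply, smul_eq_mul, mul_comm] using h : Integrable (g * Z) P)
  set M : ℝ := (ENNReal.ofReal K₁ * eLpNorm g p P).toReal with hM
  have hbound : ∀ Z ∈ 𝒵, |∫ ω, g ω * Z ω ∂P| ≤ M := by
    intro Z hZ
    have h1 : (‖∫ ω, g ω * Z ω ∂P‖₊ : ℝ≥0∞) ≤ ∫⁻ ω, ‖g ω * Z ω‖₊ ∂P :=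
      enorm_integral_le_lintegral_enorm _
    have h2 : (∫⁻ ω, ‖g ω * Z ω‖₊ ∂P) = eLpNorm (Z • g) 1 P := by
      rw [eLpNorm_one_eq_lintegral_enorm]
      congr 1; funext ω; simp [mul_comm]; rfl
    have h3 : eLpNorm (Z • g) 1 P ≤ eLpNorm Z q P * eLpNorm g p P :=
      eLpNorm_smul_le_mul_eLpNorm hg.1 (hmeas Z hZ) (hpqr := ⟨by simpa [one_div] using h1pq.symm⟩)
    have h4 : (‖∫ ω, g ω * Z ω ∂P‖₊ : ℝ≥0∞) ≤ ENNReal.ofReal K₁ * eLpNorm g p P := by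
      refine (h1.trans (h2 ▸ h3)).trans ?_
      exact mul_le_mul_left (hK Z hZ) _
    have hMne : ENNReal.ofReal K₁ * eLpNorm g p P ≠ ⊤ :=
      ENNReal.mul_ne_top ENNReal.ofReal_ne_top hg.eLpNorm_ne_top
    have := ENNReal.toReal_mono hMne h4
    simpa [Real.norm_eq_abs, hM, ENNReal.toReal_mul] using this
  set R : Set ℝ := (fun Z => ∫ ω, g ω * Z ω ∂P) '' 𝒵 with hR
  have hval : ∀ Z ∈ 𝒵, ∫ ω, g' ω * Z ω ∂P = (∫ ω, g ω * Z ω ∂P) + d := by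
    intro Z hZ
    have hZint : Integrable Z P := (hZmem Z hZ).integrable hq1
    have h1 : (fun ω => g' ω * Z ω) =ᵐ[P] fun ω => g ω * Z ω + d * Z ω :=
      hgg'.mono fun ω h => by simp only [show g' ω = g ω + d from h]; ring
    rw [integral_congr_ae h1, integral_add (hint Z hZ) (hZint.const_mul d),
      integral_const_mul, hdens Z hZ, mul_one]
  have himg : (fun Z => ∫ ω, g' ω * Z ω ∂P) '' 𝒵 = (fun r => r + d) '' R := by
    rw [hR, Set.image_image]
    exact Set.image_congr hval
  have hRne : R.Nonempty := hne.image _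
  have hRbdd : BddBelow R := by
    refine ⟨-M, ?_⟩
    rintro r ⟨Z, hZ, rfl⟩
    exact neg_le_of_abs_le (hbound Z hZ)
  have hRbdd' : BddBelow ((fun r => r + d) '' R) := by
    obtain ⟨b, hb⟩ := hRbdd
    exact ⟨b + d, by rintro y ⟨r, hr, rfl⟩; exact add_le_add_left (hb hr) d⟩
  show sInf _ = sInf R + d
  rw [himg]
  apply le_antisymm
  · rw [← sub_le_iff_le_add]
    refine le_csInf hRne fun r hr => ?_
    rw [sub_le_iff_le_add]
    exact csInf_le hRbdd' ⟨r, hr, rfl⟩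
  · refine le_csInf (hRne.image _) ?_
    rintro y ⟨r, hr, rfl⟩
    exact add_le_add_left (csInf_le hRbdd hr) d

lemma askGain_memLp (P : Measure Ω) [IsProbabilityMeasure P]
    (T m : ℕ) (hT : 1 ≤ T) (p : ℝ≥0∞)
    (F : ℕ → MeasurableSpace Ω) (hFmono : Monotone F) (hFle : ∀ t, F t ≤ m0)
    (S : ℕ → Fin m → Ω → ℝ)
    (hSmeas : ∀ t ≤ T, ∀ i, StronglyMeasurable[F t] (S t i))
    (hSmem : ∀ t ≤ T, ∀ i, MemLp (S t i) p P)
    (C : ℕ → Ω → ℝ)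
    (hCmem : ∀ t, 1 ≤ t → t ≤ T → MemLp (C t) p P)
    (x : ℕ → Fin m → Ω → ℝ)
    (hxmeas : ∀ t < T, ∀ i, StronglyMeasurable[F t] (x t i))
    (K : ℝ) (hxK : ∀ t < T, ∀ i, ∀ᵐ ω ∂P, |x t i ω| ≤ K)
    (t : ℕ) (ht1 : 1 ≤ t) (htT : t ≤ T) :
    MemLp (askGain T m S C x t) p P := by
  have key : ∀ (a b : ℕ), a < T → b ≤ T → ∀ i : Fin m,
      MemLp (fun ω => x a i ω * S b i ω) p P := by
    intro a b ha hb i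
    have hsm : AEStronglyMeasurable (fun ω => x a i ω * S b i ω) P := by
      refine StronglyMeasurable.aestronglyMeasurable ?_
      exact (((hxmeas a ha i).mono (hFle a)).mul ((hSmeas b hb i).mono (hFle b)))
    refine MemLp.of_le_mul (c := K) (hSmem b hb i) hsm ?_
    filter_upwards [hxK a ha i] with ω hω
    simp only [Real.norm_eq_abs, abs_mul]
    exact mul_le_mul_of_nonneg_right hω (abs_nonneg _)
  by_cases h : t < T
  · have e : askGain T m S C x t = fun ω =>
        (∑ i, (x (t - 1) i ω * S t i ω - x t i ω * S t i ω)) - C t ω := by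
      funext ω; simp only [askGain, if_pos h, sub_mul]
    rw [e]
    exact (memLp_finset_sum univ (fun i _ =>
      (key (t-1) t (lt_of_le_of_lt (Nat.sub_le t 1) h) htT i).sub
        (key t t h htT i))).sub (hCmem t ht1 htT)
  · have htT' : t = T := le_antisymm htT (not_lt.mp h)
    have e : askGain T m S C x t = fun ω =>
        (∑ i, x (T - 1) i ω * S T i ω) - C T ω := by
      funext ω; simp only [askGain, if_neg h]
    rw [e]
    exact (memLp_finset_sum univ (fun i _ =>
      key (T-1) T (by omega) le_rfl i)).sub (hCmem T hT le_rfl)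

/-- Lemma 2.1 of the paper. Under Assumptions A1 and A3,
`|v^β − v*| ≤ 2 β̄ ‖S₀‖₁` for `β` in a neighborhood of `0`. -/
theorem perturbed_askValue_close
    (P : Measure Ω) [IsProbabilityMeasure P]
    (T m : ℕ) (hT : 1 ≤ T) (hm : 0 < m)
    (p q : ℝ≥0∞) (hp1 : 1 < p) (hptop : p < ⊤) (hpq : 1 / p + 1 / q = 1)
    -- filtration
    (F : ℕ → MeasurableSpace Ω) (hFmono : Monotone F) (hFle : ∀ t, F t ≤ m0)
    (hF0 : F 0 = ⊥)
    -- asset price process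
    (S : ℕ → Fin m → Ω → ℝ) (S₀ : Fin m → ℝ)
    (hS0 : ∀ i ω, S 0 i ω = S₀ i)
    (hSmeas : ∀ t ≤ T, ∀ i, StronglyMeasurable[F t] (S t i))
    (hSmem : ∀ t ≤ T, ∀ i, MemLp (S t i) p P)
    (hSnonneg : ∀ t ≤ T, ∀ i, ∀ᵐ ω ∂P, 0 ≤ S t i ω)
    -- numéraire: the first asset is identically 1
    (hnum : ∀ t ≤ T, ∀ᵐ ω ∂P, S t ⟨0, hm⟩ ω = 1)
    -- contingent claim
    (C : ℕ → Ω → ℝ)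
    (hCmeas : ∀ t, 1 ≤ t → t ≤ T → StronglyMeasurable[F t] (C t))
    (hCmem : ∀ t, 1 ≤ t → t ≤ T → MemLp (C t) p P)
    -- superdifferentials of the acceptability functionals
    (𝒵 : ℕ → Set (Ω → ℝ))
    (h𝒵ne : ∀ t, 1 ≤ t → t ≤ T → (𝒵 t).Nonempty)
    (h𝒵conv : ∀ t, 1 ≤ t → t ≤ T → Convex ℝ (𝒵 t))
    (h𝒵meas : ∀ t, 1 ≤ t → t ≤ T → ∀ Z ∈ 𝒵 t, StronglyMeasurable[F t] Z)
    (h𝒵nonneg : ∀ t, 1 ≤ t → t ≤ T → ∀ Z ∈ 𝒵 t, 0 ≤ᵐ[P] Z)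
    (h𝒵dens : ∀ t, 1 ≤ t → t ≤ T → ∀ Z ∈ 𝒵 t, ∫ ω, Z ω ∂P = 1)
    -- Assumption A1
    (K₁ : ℝ)
    (hA1 : ∀ t, 1 ≤ t → t ≤ T → ∀ Z ∈ 𝒵 t, eLpNorm Z q P ≤ ENNReal.ofReal K₁)
    -- Assumption A3: attainment and uniform boundedness near β = 0
    (δ : ℝ) (hδ : 0 < δ) (K₂ : ℝ)
    (hA3attain : ∀ β : ℕ → ℝ, (∀ t, 1 ≤ t → t ≤ T → |β t| ≤ δ) →
      ∃ x, AskFeasible P T m F S C 𝒵 β x ∧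
        initCost P m S x = askValue P T m F S C 𝒵 β)
    (hA3bound : ∀ β : ℕ → ℝ, (∀ t, 1 ≤ t → t ≤ T → |β t| ≤ δ) →
      ∀ x, AskFeasible P T m F S C 𝒵 β x →
        initCost P m S x = askValue P T m F S C 𝒵 β →
        ∀ t < T, ∀ i, ∀ᵐ ω ∂P, |x t i ω| ≤ K₂) :
    ∀ β : ℕ → ℝ, (∀ t, 1 ≤ t → t ≤ T → |β t| ≤ δ) →
      |askValue P T m F S C 𝒵 β - askValue P T m F S C 𝒵 (fun _ => 0)| ≤
        2 * (∑ t ∈ Icc 1 T, |β t|) * ∑ i, S₀ i := by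
  intro β hβδ
  have hPne : (ae P).NeBot := ae_neBot.mpr (IsProbabilityMeasure.ne_zero P)
  have hS₀1 : S₀ ⟨0, hm⟩ = 1 := by
    obtain ⟨ω, hω⟩ := (hnum 0 (Nat.zero_le T)).exists
    rw [← hS0 ⟨0, hm⟩ ω]; exact hω
  have hS₀nn : ∀ i, 0 ≤ S₀ i := by
    intro i
    obtain ⟨ω, hω⟩ := (hSnonneg 0 (Nat.zero_le T) i).exists
    rw [← hS0 i ω]; exact hω
  have hsum_nn : (0:ℝ) ≤ ∑ i, S₀ i := Finset.sum_nonneg fun i _ => hS₀nn i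
  have hsum_one : (1:ℝ) ≤ ∑ i, S₀ i := by
    calc (1:ℝ) = S₀ ⟨0, hm⟩ := hS₀1.symm
    _ ≤ ∑ i, S₀ i := Finset.single_le_sum (fun i _ => hS₀nn i) (mem_univ _)
  set β' : ℝ := ∑ t ∈ Icc 1 T, |β t| with hβ'def
  have hβ'nn : 0 ≤ β' := Finset.sum_nonneg fun _ _ => abs_nonneg _
  set c : ℕ → ℝ := fun t => ∑ s ∈ Icc (t+1) T, |β s| with hcdef
  have hc0 : c 0 = β' := by simp [hcdef, hβ'def]
  have hcnn : ∀ t, 0 ≤ c t := fun t => Finset.sum_nonneg fun _ _ => abs_nonneg _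
  have hcle : ∀ t, c t ≤ β' := by
    intro t
    rw [hβ'def]
    simp only [hcdef]
    exact Finset.sum_le_sum_of_subset_of_nonneg
      (Finset.Icc_subset_Icc (by omega) le_rfl) (fun _ _ _ => abs_nonneg _)
  have hcT : c T = 0 := by
    simp [hcdef, Finset.Icc_eq_empty (by omega : ¬ T + 1 ≤ T)]
  have hstep : ∀ t, 1 ≤ t → t ≤ T → c (t-1) - c t = |β t| := by
    intro t ht1 htT
    have h1 : t - 1 + 1 = t := by omega
    have h2 : Icc (t+1) T = Ioc t T := Finset.Icc_add_one_left_eq_Ioc t T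
    simp only [hcdef, h1, h2]
    rw [Finset.Icc_eq_cons_Ioc htT, Finset.sum_cons]
    ring
  set i0 : Fin m := ⟨0, hm⟩ with hi0
  set Φ : (ℕ → Fin m → Ω → ℝ) → ℕ → Fin m → Ω → ℝ :=
      fun x t i ω => x t i ω + (if i = i0 then c t else 0) with hΦdef
  have hgain : ∀ x : ℕ → Fin m → Ω → ℝ, ∀ t, 1 ≤ t → t ≤ T → ∀ ω,
      askGain T m S C (Φ x) t ω
        = askGain T m S C x t ω + (c (t-1) - c t) * S t i0 ω := by
    intro x t ht1 htT ω
    by_cases h : t < T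
    · simp only [askGain, if_pos h, hΦdef]
      have key : ∀ i : Fin m,
          (x (t-1) i ω + (if i = i0 then c (t-1) else 0)
            - (x t i ω + (if i = i0 then c t else 0))) * S t i ω
          = (x (t-1) i ω - x t i ω) * S t i ω
            + (if i = i0 then (c (t-1) - c t) * S t i ω else 0) := by
        intro i; by_cases hi : i = i0 <;> simp [hi] <;> ring
      rw [Finset.sum_congr rfl fun i _ => key i, Finset.sum_add_distrib,
        Finset.sum_ite_eq' univ i0 (fun i => (c (t-1) - c t) * S t i ω)]
      simp only [mem_univ, if_true]
      ring
    · have ht : t = T := by omega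
      subst ht
      simp only [askGain, if_neg h, hΦdef]
      have key : ∀ i : Fin m,
          (x (t-1) i ω + (if i = i0 then c (t-1) else 0)) * S t i ω
          = x (t-1) i ω * S t i ω + (if i = i0 then c (t-1) * S t i ω else 0) := by
        intro i; by_cases hi : i = i0 <;> simp [hi] <;> ring
      rw [Finset.sum_congr rfl fun i _ => key i, Finset.sum_add_distrib,
        Finset.sum_ite_eq' univ i0 (fun i => c (t-1) * S t i ω)]
      simp only [mem_univ, if_true, hcT]
      ring
  have hfeas : ∀ (γ γ' : ℕ → ℝ) (x : ℕ → Fin m → Ω → ℝ),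
      AskFeasible P T m F S C 𝒵 γ x →
      (∀ t, 1 ≤ t → t ≤ T → γ' t ≤ γ t + |β t|) →
      AskFeasible P T m F S C 𝒵 γ' (Φ x) := by
    rintro γ γ' x ⟨⟨hx0, hxmeas, K, hxK⟩, hxacc⟩ hγ
    refine ⟨⟨?_, ?_, ?_⟩, ?_⟩
    · intro i
      obtain ⟨ci, hci⟩ := hx0 i
      exact ⟨ci + (if i = i0 then c 0 else 0), fun ω => by simp [hΦdef, hci]⟩
    · intro t ht i
      exact (hxmeas t ht i).add stronglyMeasurable_const
    · refine ⟨K + β', fun t ht i => ?_⟩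
      filter_upwards [hxK t ht i] with ω hω
      simp only [hΦdef]
      calc |x t i ω + (if i = i0 then c t else 0)|
          ≤ |x t i ω| + |if i = i0 then c t else 0| := abs_add_le _ _
      _ ≤ K + β' := by
          refine add_le_add hω ?_
          by_cases hi : i = i0 <;>
            simp [hi, abs_of_nonneg (hcnn t), hcle t, hβ'nn]
    · intro t ht1 htT
      have hae : askGain T m S C (Φ x) t =ᵐ[P]
          fun ω => askGain T m S C x t ω + |β t| := by
        filter_upwards [hnum t htT] with ω hω
        show askGain T m S C (Φ x) t ω = askGain T m S C x t ω + |β t|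
        rw [hgain x t ht1 htT ω, hω, mul_one, hstep t ht1 htT]
      have hgmem : MemLp (askGain T m S C x t) p P :=
        askGain_memLp P T m hT p F hFmono hFle S hSmeas hSmem C hCmem x hxmeas
          K hxK t ht1 htT
      have hz : ∀ Z ∈ 𝒵 t, AEStronglyMeasurable Z P := fun Z hZ =>
        ((h𝒵meas t ht1 htT Z hZ).mono (hFle t)).aestronglyMeasurable
      have hshift := accFun_shift P (𝒵 t) (h𝒵ne t ht1 htT) hpq K₁ hz
        (hA1 t ht1 htT) (h𝒵dens t ht1 htT) hgmem (|β t|) hae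
      rw [hshift]
      calc γ' t ≤ γ t + |β t| := hγ t ht1 htT
      _ ≤ _ := add_le_add_left (hxacc t ht1 htT) _
  have hcost : ∀ x : ℕ → Fin m → Ω → ℝ, IsStrategy P T m F x →
      initCost P m S (Φ x) = initCost P m S x + β' := by
    intro x hx
    obtain ⟨hx0, -, -⟩ := hx
    choose k hk using hx0
    have e1 : initCost P m S x = ∑ i, k i * S₀ i := by
      have e : (fun ω => ∑ i, x 0 i ω * S 0 i ω) = fun _ => ∑ i, k i * S₀ i := by
        funext ω; exact Finset.sum_congr rfl fun i _ => by rw [hk i ω, hS0 i ω]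
      simp only [initCost]
      rw [e, integral_const]
      simp
    have e2 : initCost P m S (Φ x)
        = ∑ i, (k i + (if i = i0 then c 0 else 0)) * S₀ i := by
      have e : (fun ω => ∑ i, Φ x 0 i ω * S 0 i ω)
          = fun _ => ∑ i, (k i + (if i = i0 then c 0 else 0)) * S₀ i := by
        funext ω
        refine Finset.sum_congr rfl fun i _ => ?_
        simp only [hΦdef]
        rw [hk i ω, hS0 i ω]
      simp only [initCost]
      rw [e, integral_const]
      simp
    rw [e1, e2]
    have key : ∀ i : Fin m, (k i + (if i = i0 then c 0 else 0)) * S₀ i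
        = k i * S₀ i + (if i = i0 then c 0 * S₀ i else 0) := by
      intro i; by_cases hi : i = i0 <;> simp [hi] <;> ring
    rw [Finset.sum_congr rfl fun i _ => key i, Finset.sum_add_distrib,
      Finset.sum_ite_eq' univ i0 (fun i => c 0 * S₀ i)]
    simp only [mem_univ, if_true, hc0]
    rw [show S₀ i0 = 1 from hS₀1]
    ring
  obtain ⟨xβ, hxβf, hxβv⟩ := hA3attain β hβδ
  obtain ⟨x0, hx0f, hx0v⟩ := hA3attain (fun _ => 0) (fun t _ _ => by simpa using hδ.le)
  set Sb := {r : ℝ | ∃ x, AskFeasible P T m F S C 𝒵 β x ∧ r = initCost P m S x}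
    with hSb
  set Sz := {r : ℝ | ∃ x, AskFeasible P T m F S C 𝒵 (fun _ => 0) x
    ∧ r = initCost P m S x} with hSz
  have hSbne : Sb.Nonempty := ⟨initCost P m S xβ, xβ, hxβf, rfl⟩
  have hSzne : Sz.Nonempty := ⟨initCost P m S x0, x0, hx0f, rfl⟩
  have mapzb : ∀ r ∈ Sz, r + β' ∈ Sb := by
    rintro r ⟨x, hf, rfl⟩
    exact ⟨Φ x, hfeas _ _ x hf (fun t _ _ => by simpa using le_abs_self (β t)),
      (hcost x hf.1).symm⟩
  have mapbz : ∀ r ∈ Sb, r + β' ∈ Sz := by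
    rintro r ⟨x, hf, rfl⟩
    refine ⟨Φ x, hfeas _ _ x hf (fun t _ _ => ?_), (hcost x hf.1).symm⟩
    have := neg_abs_le (β t); linarith
  show |sInf Sb - sInf Sz| ≤ 2 * β' * ∑ i, S₀ i
  by_cases hB : BddBelow Sz
  · have hBb : BddBelow Sb := by
      obtain ⟨b, hb⟩ := hB
      exact ⟨b - β', fun r hr => by have := hb (mapbz r hr); linarith⟩
    have h1 : sInf Sb ≤ sInf Sz + β' := by
      rw [← sub_le_iff_le_add]
      exact le_csInf hSzne fun r hr => sub_le_iff_le_add.mpr (csInf_le hBb (mapzb r hr))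
    have h2 : sInf Sz ≤ sInf Sb + β' := by
      rw [← sub_le_iff_le_add]
      exact le_csInf hSbne fun r hr => sub_le_iff_le_add.mpr (csInf_le hB (mapbz r hr))
    have habs : |sInf Sb - sInf Sz| ≤ β' := abs_le.mpr ⟨by linarith, by linarith⟩
    have hfin : β' ≤ 2 * β' * ∑ i, S₀ i := by
      nlinarith [mul_nonneg hβ'nn (by linarith : (0:ℝ) ≤ 2 * (∑ i, S₀ i) - 1)]
    linarith
  · have hBb : ¬ BddBelow Sb := by
      intro hb'
      obtain ⟨b, hb⟩ := hb'
      exact hB ⟨b - β', fun r hr => by have := hb (mapzb r hr); linarith⟩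
    rw [csInf_of_not_bddBelow hBb, csInf_of_not_bddBelow hB, Real.sInf_empty]
    simpa using mul_nonneg (mul_nonneg (by norm_num : (0:ℝ) ≤ 2) hβ'nn) hsum_nn


end
end

section
/- Let D̄₁ ⊂ ℝ^{d₁} and D̄₂ ⊂ ℝ^{d₂} be compact sets, write D̄ = D̄₁×D̄₂, let Δ be the diameter of D̄ and assume λ(D̄₁) ≤ Δ^{d₁} (λ denoting Lebesgue measure). Let f and g be bivariate probability densities supported on D̄ with 0 < c̲ ≤ f(x,y), g(x,y) ≤ c̄ < ∞ on D̄, and define the conditional densities f(x|y) := f(x,y)/∫_{D̄₁} f(x′,y)dx′ and analogously g(x|y). If ‖f − g‖_{D̄} := sup_{(x,y)∈D̄}|f(x,y)−g(x,y)| ≤ c̲·λ(D̄₁)/(2·Δ^{d₁}), then for all x ∈ D̄₁ and y ∈ D̄₂: |f(x|y) − g(x|y)| ≤ κ₁·‖f − g‖_{D̄}, where κ₁ = 1/(c̲·λ(D̄₁)) + 2·c̄·Δ^{d₁}/(c̲·λ(D̄₁))². -/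
open MeasureTheory
open scoped ENNReal NNReal

noncomputable section

/-- Proposition 3.5 of the paper. If two bivariate densities, bounded
between `clo > 0` and `chi < ∞` on their common compact support `D̄ = D̄₁ × D̄₂`, are
uniformly close, then their conditional densities are close as well:
`|f(x|y) − g(x|y)| ≤ κ₁ ‖f − g‖_{D̄}` with
`κ₁ = 1/(clo λ(D̄₁)) + 2 chi Δ^{d₁}/(clo λ(D̄₁))²`. -/
theorem conditional_density_close
    {d₁ d₂ : ℕ} (D₁ : Set (Fin d₁ → ℝ)) (D₂ : Set (Fin d₂ → ℝ))
    (hD₁cpt : IsCompact D₁) (hD₂cpt : IsCompact D₂)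
    -- `Δ` = diameter of `D̄ = D̄₁ × D̄₂`, and the volume comparison `λ(D̄₁) ≤ Δ^{d₁}`
    (hvol : (volume D₁).toReal ≤ Metric.diam (D₁ ×ˢ D₂) ^ d₁)
    (f g : (Fin d₁ → ℝ) × (Fin d₂ → ℝ) → ℝ)
    (hfmeas : Measurable f) (hgmeas : Measurable g)
    (hf0 : ∀ z, 0 ≤ f z) (hg0 : ∀ z, 0 ≤ g z)
    (hfsupp : ∀ z ∉ D₁ ×ˢ D₂, f z = 0) (hgsupp : ∀ z ∉ D₁ ×ˢ D₂, g z = 0)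
    (hfint : ∫ z, f z = 1) (hgint : ∫ z, g z = 1)
    (clo chi : ℝ) (hclo : 0 < clo)
    (hfbounds : ∀ z ∈ D₁ ×ˢ D₂, clo ≤ f z ∧ f z ≤ chi)
    (hgbounds : ∀ z ∈ D₁ ×ˢ D₂, clo ≤ g z ∧ g z ≤ chi)
    -- `M` is a bound for `‖f − g‖_{D̄}`, small enough
    (M : ℝ) (hM : ∀ z ∈ D₁ ×ˢ D₂, |f z - g z| ≤ M)
    (hMsmall : M ≤ clo * (volume D₁).toReal / (2 * Metric.diam (D₁ ×ˢ D₂) ^ d₁)) :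
    ∀ x ∈ D₁, ∀ y ∈ D₂,
      |f (x, y) / (∫ x' in D₁, f (x', y)) - g (x, y) / (∫ x' in D₁, g (x', y))| ≤
        (1 / (clo * (volume D₁).toReal) +
          2 * chi * Metric.diam (D₁ ×ˢ D₂) ^ d₁ / (clo * (volume D₁).toReal) ^ 2) * M := by
  intro x hx y hy
  have hD₁m : MeasurableSet D₁ := hD₁cpt.isClosed.measurableSet
  have hzmem : ((x, y) : (Fin d₁ → ℝ) × (Fin d₂ → ℝ)) ∈ D₁ ×ˢ D₂ := ⟨hx, hy⟩
  set V := (volume D₁).toReal with hVdef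
  set Δd := Metric.diam (D₁ ×ˢ D₂) ^ d₁ with hΔdef
  have hVfin : volume D₁ ≠ ⊤ := hD₁cpt.measure_lt_top.ne
  have hVne : volume D₁ ≠ 0 := by
    intro h0
    have hnull : volume (D₁ ×ˢ D₂) = 0 := by
      rw [MeasureTheory.Measure.volume_eq_prod, Measure.prod_prod, h0, zero_mul]
    have hae : f =ᵐ[volume] 0 := by
      have hae' : ∀ᵐ z : (Fin d₁ → ℝ) × (Fin d₂ → ℝ), z ∉ D₁ ×ˢ D₂ := by
        rw [ae_iff]; simp only [not_not, Set.setOf_mem_eq]; exact hnull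
      filter_upwards [hae'] with z hz
      exact hfsupp z hz
    rw [integral_congr_ae hae] at hfint
    simp at hfint
  have hVpos : 0 < V := ENNReal.toReal_pos hVne hVfin
  have hLpos : 0 < clo * V := mul_pos hclo hVpos
  have hM0 : 0 ≤ M := le_trans (abs_nonneg _) (hM _ hzmem)
  have hchi0 : 0 ≤ chi :=
    le_trans hclo.le (le_trans (hfbounds _ hzmem).1 (hfbounds _ hzmem).2)
  have hmemD : ∀ x' ∈ D₁, ((x', y) : (Fin d₁ → ℝ) × (Fin d₂ → ℝ)) ∈ D₁ ×ˢ D₂ :=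
    fun x' hx' => ⟨hx', hy⟩
  have hfim : Measurable fun x' => f (x', y) := hfmeas.comp measurable_prodMk_right
  have hgim : Measurable fun x' => g (x', y) := hgmeas.comp measurable_prodMk_right
  have hfi : IntegrableOn (fun x' => f (x', y)) D₁ := by
    apply Measure.integrableOn_of_bounded hVfin hfim.aestronglyMeasurable
    rw [ae_restrict_iff' hD₁m]
    refine ae_of_all _ fun x' hx' => ?_
    rw [Real.norm_eq_abs, abs_of_nonneg (hf0 _)]
    exact (hfbounds _ (hmemD x' hx')).2
  have hgi : IntegrableOn (fun x' => g (x', y)) D₁ := by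
    apply Measure.integrableOn_of_bounded hVfin hgim.aestronglyMeasurable
    rw [ae_restrict_iff' hD₁m]
    refine ae_of_all _ fun x' hx' => ?_
    rw [Real.norm_eq_abs, abs_of_nonneg (hg0 _)]
    exact (hgbounds _ (hmemD x' hx')).2
  have hci : IntegrableOn (fun _ : Fin d₁ → ℝ => clo) D₁ :=
    integrableOn_const hVfin
  have hFlo : clo * V ≤ ∫ x' in D₁, f (x', y) := by
    have h := setIntegral_mono_on hci hfi hD₁m
      (fun x' hx' => (hfbounds _ (hmemD x' hx')).1)
    rwa [setIntegral_const, smul_eq_mul, mul_comm] at h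
  have hGlo : clo * V ≤ ∫ x' in D₁, g (x', y) := by
    have h := setIntegral_mono_on hci hgi hD₁m
      (fun x' hx' => (hgbounds _ (hmemD x' hx')).1)
    rwa [setIntegral_const, smul_eq_mul, mul_comm] at h
  have hFG : |(∫ x' in D₁, f (x', y)) - ∫ x' in D₁, g (x', y)| ≤ M * V := by
    rw [← integral_sub hfi hgi]
    have h := norm_setIntegral_le_of_norm_le_const (μ := volume)
      (f := fun x' => f (x', y) - g (x', y)) hD₁cpt.measure_lt_top
      (C := M) (fun x' hx' => by rw [Real.norm_eq_abs]; exact hM _ (hmemD x' hx'))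
    rwa [Real.norm_eq_abs, measureReal_def] at h
  set F := ∫ x' in D₁, f (x', y) with hF
  set G := ∫ x' in D₁, g (x', y) with hG
  have hFpos : 0 < F := lt_of_lt_of_le hLpos hFlo
  have hGpos : 0 < G := lt_of_lt_of_le hLpos hGlo
  have key : f (x, y) / F - g (x, y) / G
      = (f (x, y) - g (x, y)) / F + g (x, y) * (G - F) / (F * G) := by
    field_simp
    ring
  rw [key]
  have h1 : |(f (x, y) - g (x, y)) / F| ≤ M / (clo * V) := by
    rw [abs_div, abs_of_pos hFpos]
    exact div_le_div₀ hM0 (hM _ hzmem) hLpos hFlo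
  have h2 : |g (x, y) * (G - F) / (F * G)| ≤ chi * (M * V) / ((clo * V) * (clo * V)) := by
    rw [abs_div, abs_mul, abs_of_pos (mul_pos hFpos hGpos)]
    refine div_le_div₀ (by positivity) ?_ (mul_pos hLpos hLpos)
      (mul_le_mul hFlo hGlo hLpos.le hFpos.le)
    refine mul_le_mul ?_ ?_ (abs_nonneg _) hchi0
    · rw [abs_of_nonneg (hg0 _)]; exact (hgbounds _ hzmem).2
    · rw [abs_sub_comm]; exact hFG
  have h3 : chi * (M * V) / ((clo * V) * (clo * V)) ≤ 2 * chi * Δd / (clo * V) ^ 2 * M := by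
    rw [sq, div_mul_eq_mul_div]
    refine div_le_div₀ (by positivity) ?_ (mul_pos hLpos hLpos) le_rfl
    nlinarith [mul_nonneg hchi0 hM0, hvol]
  calc |(f (x, y) - g (x, y)) / F + g (x, y) * (G - F) / (F * G)|
      ≤ |(f (x, y) - g (x, y)) / F| + |g (x, y) * (G - F) / (F * G)| := abs_add_le _ _
    _ ≤ M / (clo * V) + chi * (M * V) / ((clo * V) * (clo * V)) := add_le_add h1 h2
    _ ≤ 1 / (clo * V) * M + 2 * chi * Δd / (clo * V) ^ 2 * M :=
        add_le_add (le_of_eq (by ring)) h3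
    _ = (1 / (clo * V) + 2 * chi * Δd / (clo * V) ^ 2) * M := by ring

end
end
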